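/- Key inequality in majority decoding: for a collection of functions {f_S}_{S∈𝓢'} on subsets of [n] and g defined by pointwise majority g(x) = maj_{S∋x} f_S(x), one has E_{S₁,S₂∈𝓢'}[disagr(f_{S₁},f_{S₂})] ≥ (1/n)·(E_{S∈𝓢'}[disagr(g,f_S)])², where all expectations are over uniform independent draws from 𝓢'. -/
import Mathlib


open Finset

/-- The pointwise-majority function of a collection of local functions `f S : S → Bool`
(values of `f S` outside `S` are ignored); ties are broken towards `true`. -/
def majFun {n : ℕ} (S' : Finset (Finset (Fin n))) (f : Finset (Fin n) → Fin n → Bool)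
    (x : Fin n) : Bool :=
  decide ((S'.filter (fun S => x ∈ S ∧ f S x = false)).card
      ≤ (S'.filter (fun S => x ∈ S ∧ f S x = true)).card)

/-- Key inequality in majority decoding:
`E_{S₁,S₂∈𝓢'}[disagr(f_{S₁},f_{S₂})] ≥ (1/n)·(E_{S∈𝓢'}[disagr(g,f_S)])²`,
where `g` is the pointwise majority of the `f_S` and expectations are over uniform
independent draws from `𝓢'`. -/
theorem stmt_4 (n : ℕ) (hn : 0 < n)
    (S' : Finset (Finset (Fin n))) (hne : S'.Nonempty)
    (f : Finset (Fin n) → Fin n → Bool) :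
    ((∑ S ∈ S', ((S.filter (fun u => majFun S' f u ≠ f S u)).card : ℝ)) / (S'.card : ℝ)) ^ 2
        / (n : ℝ)
      ≤ (∑ P ∈ S' ×ˢ S', (((P.1 ∩ P.2).filter (fun u => f P.1 u ≠ f P.2 u)).card : ℝ))
          / ((S'.card : ℝ)) ^ 2 := by
  set g := majFun S' f with hg
  set A : Fin n → ℕ := fun x => (S'.filter (fun S => x ∈ S ∧ f S x ≠ g x)).card with hA
  set B : Fin n → ℕ := fun x => (S'.filter (fun S => x ∈ S ∧ f S x = g x)).card with hB
  -- majority property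
  have hAB : ∀ x, A x ≤ B x := by
    intro x
    rcases Bool.eq_false_or_eq_true (g x) with hgx | hgx
    · -- g x = true
      have hx : (S'.filter (fun S => x ∈ S ∧ f S x = false)).card
          ≤ (S'.filter (fun S => x ∈ S ∧ f S x = true)).card := by
        have h := hgx; rw [hg] at h
        simpa [majFun] using h
      have h1 : A x = (S'.filter (fun S => x ∈ S ∧ f S x = false)).card := by
        simp [hA, hgx]
      have h2 : B x = (S'.filter (fun S => x ∈ S ∧ f S x = true)).card := by
        simp [hB, hgx]
      omega
    · -- g x = false
      have hx : ¬ ((S'.filter (fun S => x ∈ S ∧ f S x = false)).card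
          ≤ (S'.filter (fun S => x ∈ S ∧ f S x = true)).card) := by
        have h := hgx; rw [hg] at h
        simpa [majFun] using h
      have h1 : A x = (S'.filter (fun S => x ∈ S ∧ f S x = true)).card := by
        simp [hA, hgx]
      have h2 : B x = (S'.filter (fun S => x ∈ S ∧ f S x = false)).card := by
        simp [hB, hgx]
      omega
  -- first sum equals ∑ A x
  have key1 : ∑ S ∈ S', (S.filter (fun u => g u ≠ f S u)).card = ∑ x : Fin n, A x := by
    have h1 : ∀ S : Finset (Fin n),
        (S.filter (fun u => g u ≠ f S u)).card
          = ∑ x : Fin n, if x ∈ S ∧ f S x ≠ g x then 1 else 0 := by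
      intro S
      rw [show S.filter (fun u => g u ≠ f S u)
          = Finset.univ.filter (fun x => x ∈ S ∧ f S x ≠ g x) by
        ext u; simp [and_comm, ne_comm]]
      rw [Finset.card_filter]
    simp_rw [h1]
    rw [Finset.sum_comm]
    apply Finset.sum_congr rfl
    intro x _
    exact (Finset.card_filter _ _).symm
  -- second sum
  have key2 : ∑ P ∈ S' ×ˢ S', ((P.1 ∩ P.2).filter (fun u => f P.1 u ≠ f P.2 u)).card
      = ∑ x : Fin n, ((S' ×ˢ S').filter
          (fun P => x ∈ P.1 ∧ x ∈ P.2 ∧ f P.1 x ≠ f P.2 x)).card := by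
    have h1 : ∀ P : Finset (Fin n) × Finset (Fin n),
        ((P.1 ∩ P.2).filter (fun u => f P.1 u ≠ f P.2 u)).card
          = ∑ x : Fin n, if x ∈ P.1 ∧ x ∈ P.2 ∧ f P.1 x ≠ f P.2 x then 1 else 0 := by
      intro P
      rw [show (P.1 ∩ P.2).filter (fun u => f P.1 u ≠ f P.2 u)
          = Finset.univ.filter (fun x => x ∈ P.1 ∧ x ∈ P.2 ∧ f P.1 x ≠ f P.2 x) by
        ext u; simp [and_assoc]]
      rw [Finset.card_filter]
    simp_rw [h1]
    rw [Finset.sum_comm]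
    apply Finset.sum_congr rfl
    intro x _
    rw [Finset.card_filter]
  -- pointwise lower bound
  have hpoint : ∀ x, A x * A x ≤ ((S' ×ˢ S').filter
      (fun P => x ∈ P.1 ∧ x ∈ P.2 ∧ f P.1 x ≠ f P.2 x)).card := by
    intro x
    have hsub : (S'.filter (fun S => x ∈ S ∧ f S x ≠ g x))
        ×ˢ (S'.filter (fun S => x ∈ S ∧ f S x = g x))
        ⊆ (S' ×ˢ S').filter (fun P => x ∈ P.1 ∧ x ∈ P.2 ∧ f P.1 x ≠ f P.2 x) := by
      rintro ⟨S1, S2⟩ hmem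
      simp only [Finset.mem_product, Finset.mem_filter] at hmem ⊢
      obtain ⟨⟨h1, hx1, hne1⟩, ⟨h2, hx2, heq2⟩⟩ := hmem
      refine ⟨⟨h1, h2⟩, hx1, hx2, ?_⟩
      rw [heq2]; exact hne1
    calc A x * A x ≤ A x * B x := Nat.mul_le_mul_left _ (hAB x)
      _ = ((S'.filter (fun S => x ∈ S ∧ f S x ≠ g x))
          ×ˢ (S'.filter (fun S => x ∈ S ∧ f S x = g x))).card := by
          rw [Finset.card_product]
      _ ≤ _ := Finset.card_le_card hsub
  -- assemble over ℝ
  have hm : (0 : ℝ) < (S'.card : ℝ) := by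
    exact_mod_cast Finset.card_pos.mpr hne
  have hnR : (0 : ℝ) < (n : ℝ) := by exact_mod_cast hn
  have hsum1 : (∑ S ∈ S', ((S.filter (fun u => majFun S' f u ≠ f S u)).card : ℝ))
      = (∑ x : Fin n, (A x : ℝ)) := by
    exact_mod_cast key1
  have hsum2 : (∑ x : Fin n, (A x : ℝ) * (A x : ℝ))
      ≤ ∑ P ∈ S' ×ˢ S', (((P.1 ∩ P.2).filter (fun u => f P.1 u ≠ f P.2 u)).card : ℝ) := by
    rw [← Nat.cast_sum]
    have : (∑ x : Fin n, (A x * A x : ℕ) : ℝ) ≤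
        ((∑ P ∈ S' ×ˢ S', ((P.1 ∩ P.2).filter (fun u => f P.1 u ≠ f P.2 u)).card : ℕ) : ℝ) := by
      exact_mod_cast by
        rw [key2]; exact Finset.sum_le_sum fun x _ => hpoint x
    simpa using this
  -- Cauchy-Schwarz
  have hCS : (∑ x : Fin n, (A x : ℝ)) ^ 2 ≤ (n : ℝ) * ∑ x : Fin n, (A x : ℝ) * (A x : ℝ) := by
    have := sq_sum_le_card_mul_sum_sq (s := (Finset.univ : Finset (Fin n)))
      (f := fun x => (A x : ℝ))
    simpa [sq] using this
  rw [hsum1, div_pow, div_div, div_le_div_iff₀ (by positivity) (by positivity)]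
  calc (∑ x : Fin n, (A x : ℝ)) ^ 2 * (S'.card : ℝ) ^ 2
      ≤ ((n : ℝ) * ∑ x : Fin n, (A x : ℝ) * (A x : ℝ)) * (S'.card : ℝ) ^ 2 := by
        apply mul_le_mul_of_nonneg_right hCS (by positivity)
    _ ≤ ((n : ℝ) * ∑ P ∈ S' ×ˢ S',
          (((P.1 ∩ P.2).filter (fun u => f P.1 u ≠ f P.2 u)).card : ℝ)) * (S'.card : ℝ) ^ 2 := by
        apply mul_le_mul_of_nonneg_right
          (mul_le_mul_of_nonneg_left hsum2 (le_of_lt hnR)) (by positivity)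
    _ = (∑ P ∈ S' ×ˢ S', (((P.1 ∩ P.2).filter (fun u => f P.1 u ≠ f P.2 u)).card : ℝ))
          * ((S'.card : ℝ) ^ 2 * (n : ℝ)) := by ring
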